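/- arXiv:1806.07838 — 2 statements merged into one kernel-verified Lean document; each statement's English description precedes it below -/
import Mathlib

section
/- Let f: [0,1] \to [0,1] be increasing with f(q)=q and suppose f is k times continuously differentiable near q with f'(q)=\xi>1, f^{(r)}(q)=0 for 1<r<k, and f^{(k)}(q)>0 with k even. Let c > f^{(k)}(q)/(k! \xi(\xi^{k-1}-1)) and define g_n(x) = f^n(q + x/\xi^n). Then there exists \epsilon > 0 such that for all n \ge 0 and all |x| \le \epsilon, q + x \le g_n(x) \le q + x + c x^k. -/
open Set Filter

section aux

lemma itdW_open {n : ℕ} {f : ℝ → ℝ} {s : Set ℝ} (hs : IsOpen s) {x : ℝ} (hx : x ∈ s) :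
    iteratedDerivWithin n f s x = iteratedDeriv n f x := by
  rw [iteratedDerivWithin_eq_iteratedFDerivWithin, iteratedDeriv_eq_iteratedFDeriv,
    iteratedFDerivWithin_of_isOpen n hs hx]

lemma itd_sub {n : ℕ} {f g : ℝ → ℝ} {x : ℝ} (hf : ContDiffAt ℝ n f x)
    (hg : ContDiffAt ℝ n g x) :
    iteratedDeriv n (f - g) x = iteratedDeriv n f x - iteratedDeriv n g x := by
  obtain ⟨u, hu, hfu⟩ := hf.contDiffOn le_rfl (by simp)
  obtain ⟨v, hv, hgv⟩ := hg.contDiffOn le_rfl (by simp)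
  obtain ⟨w, hw1, hw2, hw3⟩ := mem_nhds_iff.mp (Filter.inter_mem hu hv)
  rw [← itdW_open hw2 hw3 (f := f - g), ← itdW_open hw2 hw3 (f := f), ← itdW_open hw2 hw3 (f := g),
    iteratedDerivWithin_sub hw3 hw2.uniqueDiffOn ((hfu.mono fun y hy => (hw1 hy).1) x hw3)
      ((hgv.mono fun y hy => (hw1 hy).2) x hw3)]

lemma itd_zero_fun : ∀ (n : ℕ), iteratedDeriv n (fun _ : ℝ => (0:ℝ)) = fun _ => 0 := by
  intro n
  induction n with
  | zero => rw [iteratedDeriv_zero]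
  | succ m ih => rw [iteratedDeriv_succ', deriv_const']; exact ih

lemma itd_affine (q x : ℝ) (n : ℕ) (hn : 2 ≤ n) :
    iteratedDeriv n (fun t : ℝ => q + x * t) = fun _ => 0 := by
  obtain ⟨m, rfl⟩ : ∃ m, n = m + 2 := ⟨n - 2, by omega⟩
  have hd : deriv (fun t : ℝ => q + x * t) = fun _ => x := by
    funext t
    simpa using (((hasDerivAt_id t).const_mul x).const_add q).deriv
  rw [iteratedDeriv_succ' (n := m + 1), hd, iteratedDeriv_succ', deriv_const']
  exact itd_zero_fun m

lemma itd_affine_one (q x : ℝ) : iteratedDeriv 1 (fun t : ℝ => q + x * t) = fun _ => x := by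
  rw [iteratedDeriv_one]
  funext t
  simpa using (((hasDerivAt_id t).const_mul x).const_add q).deriv

lemma peano : ∀ (k : ℕ) (g : ℝ → ℝ), ContDiffAt ℝ k g 0 →
    (∀ i, i < k → iteratedDeriv i g 0 = 0) → ∀ δ : ℝ, 0 < δ →
    ∀ᶠ t in nhds (0:ℝ), |g t - iteratedDeriv k g 0 / k.factorial * t ^ k| ≤ δ * |t| ^ k := by
  intro k
  induction k with
  | zero =>
    intro g hg _ δ hδ
    have hc : ContinuousAt g 0 := hg.continuousAt
    filter_upwards [Metric.tendsto_nhds.mp hc.tendsto δ hδ] with t ht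
    rw [Real.dist_eq] at ht
    simp only [pow_zero, Nat.factorial_zero, Nat.cast_one, div_one, mul_one, iteratedDeriv_zero]
    linarith
  | succ k IH =>
    intro g hg h0 δ hδ
    obtain ⟨u, hu, hcd⟩ := hg.contDiffOn le_rfl (by simp)
    obtain ⟨v, hvu, hv, h0v⟩ := mem_nhds_iff.mp hu
    have hcd' : ContDiffOn ℝ (k + 1) g v := hcd.mono hvu
    have hdg : ContDiffOn ℝ k (deriv g) v := hcd'.deriv_of_isOpen hv (by exact_mod_cast le_rfl)
    have hdgAt : ContDiffAt ℝ k (deriv g) 0 := hdg.contDiffAt (hv.mem_nhds h0v)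
    have h0' : ∀ i, i < k → iteratedDeriv i (deriv g) 0 = 0 := by
      intro i hi
      have := h0 (i + 1) (by omega)
      rwa [iteratedDeriv_succ'] at this
    obtain ⟨r, hr, hball⟩ := Metric.eventually_nhds_iff.mp (IH (deriv g) hdgAt h0' δ hδ)
    obtain ⟨r2, hr2, hball2⟩ := Metric.mem_nhds_iff.mp (hv.mem_nhds h0v)
    have hg0 : g 0 = 0 := by
      have := h0 0 (by omega); rwa [iteratedDeriv_zero] at this
    have hCk : iteratedDeriv (k + 1) g 0 = iteratedDeriv k (deriv g) 0 := by
      rw [iteratedDeriv_succ']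
    set C := iteratedDeriv (k + 1) g 0 with hCdef
    rw [Metric.eventually_nhds_iff]
    refine ⟨min r r2, lt_min hr hr2, fun t ht => ?_⟩
    rw [Real.dist_eq, sub_zero] at ht
    set G : ℝ → ℝ := fun s => g s - C / (k + 1).factorial * s ^ (k + 1) with hGdef
    have hmem : ∀ s : ℝ, s ∈ Metric.closedBall (0:ℝ) |t| → s ∈ v := by
      intro s hs
      simp only [Metric.mem_closedBall, Real.dist_eq, sub_zero] at hs
      apply hball2
      simp only [Metric.mem_ball, Real.dist_eq, sub_zero]
      exact lt_of_le_of_lt hs (lt_of_lt_of_le ht (min_le_right _ _))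
    have hdiffg : ∀ s : ℝ, s ∈ v → DifferentiableAt ℝ g s := by
      intro s hs
      exact (hcd'.differentiableOn (by simp)).differentiableAt
        (hv.mem_nhds hs)
    have hdiffG : ∀ s ∈ Metric.closedBall (0:ℝ) |t|, DifferentiableAt ℝ G s := by
      intro s hs
      exact (hdiffg s (hmem s hs)).sub ((differentiableAt_pow (k + 1)).const_mul _)
    have hbound : ∀ s ∈ Metric.closedBall (0:ℝ) |t|, ‖deriv G s‖ ≤ δ * |t| ^ k := by
      intro s hs
      have hds : deriv G s = deriv g s - C / k.factorial * s ^ k := by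
        rw [hGdef]
        rw [deriv_fun_sub (hdiffg s (hmem s hs)) ((differentiableAt_pow (k + 1)).const_mul _),
          deriv_const_mul _ (differentiableAt_pow (k + 1)), deriv_pow_field]
        have : (k : ℝ) + 1 ≠ 0 := by positivity
        rw [Nat.factorial_succ]
        push_cast
        field_simp
      simp only [Metric.mem_closedBall, Real.dist_eq, sub_zero] at hs
      have h1 : |deriv g s - iteratedDeriv k (deriv g) 0 / k.factorial * s ^ k| ≤ δ * |s| ^ k :=
        hball (by rw [Real.dist_eq, sub_zero]; exact lt_of_le_of_lt hs (lt_of_lt_of_le ht (min_le_left _ _)))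
      rw [← hCk] at h1
      rw [Real.norm_eq_abs, hds]
      calc |deriv g s - C / k.factorial * s ^ k| ≤ δ * |s| ^ k := h1
        _ ≤ δ * |t| ^ k := by
            have := pow_le_pow_left₀ (abs_nonneg s) hs k
            nlinarith
    have hG0 : G 0 = 0 := by simp [hGdef, hg0]
    have key := Convex.norm_image_sub_le_of_norm_deriv_le hdiffG hbound
      (convex_closedBall _ _) (Metric.mem_closedBall_self (abs_nonneg t))
      (Metric.mem_closedBall.mpr (by rw [Real.dist_eq, sub_zero]))
    rw [hG0, sub_zero, sub_zero, Real.norm_eq_abs, Real.norm_eq_abs] at key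
    calc |g t - C / (k + 1).factorial * t ^ (k + 1)| = |G t| := rfl
      _ ≤ δ * |t| ^ k * |t| := key
      _ = δ * |t| ^ (k + 1) := by ring

end aux

set_option maxHeartbeats 1000000 in
theorem stmt_14 (f : ℝ → ℝ) (q ξ c : ℝ) (k : ℕ)
    (hk2 : 2 ≤ k) (hkeven : Even k)
    (hmono : MonotoneOn f (Set.Icc 0 1))
    (hmap : Set.MapsTo f (Set.Icc 0 1) (Set.Icc 0 1))
    (hq : q ∈ Set.Icc (0:ℝ) 1) (hfix : f q = q)
    (hsmooth : ContDiffAt ℝ k f q)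
    (hd1 : iteratedDeriv 1 f q = ξ) (hξ : 1 < ξ)
    (hdr : ∀ r, 1 < r → r < k → iteratedDeriv r f q = 0)
    (hdk : 0 < iteratedDeriv k f q)
    (hc : iteratedDeriv k f q / (k.factorial * ξ * (ξ ^ (k - 1) - 1)) < c) :
    ∃ ε > 0, ∀ n : ℕ, ∀ x : ℝ, |x| ≤ ε →
      q + x ≤ f^[n] (q + x / ξ ^ n) ∧
      f^[n] (q + x / ξ ^ n) ≤ q + x + c * x ^ k := by
  obtain ⟨m, rfl⟩ : ∃ m, k = m + 1 := ⟨k - 1, by omega⟩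
  set k := m + 1 with hkdef
  have hm1 : 1 ≤ m := by omega
  have hkm : k - 1 = m := by omega
  rw [hkm] at hc
  have hξ0 : (0:ℝ) < ξ := lt_trans one_pos hξ
  have hξm : 1 < ξ ^ m := one_lt_pow₀ hξ (by omega)
  have hξmpos : (0:ℝ) < ξ ^ m := by positivity
  have hξkpos : (0:ℝ) < ξ ^ k := by positivity
  have hfact : (0:ℝ) < k.factorial := by positivity
  set D := iteratedDeriv k f q with hD
  have hden : (0:ℝ) < (k.factorial : ℝ) * ξ * (ξ ^ m - 1) := by
    have : (0:ℝ) < ξ ^ m - 1 := by linarith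
    positivity
  have hc0 : (0:ℝ) < c := lt_trans (div_pos hdk hden) hc
  set A := D / k.factorial with hA
  set M := c * ξ * (ξ ^ m - 1) with hM
  have hA0 : 0 < A := div_pos hdk hfact
  have hAM : A < M := by
    have h1 := (div_lt_iff₀ hden).mp hc
    rw [hA, hM, div_lt_iff₀ hfact]
    nlinarith
  have hM0 : 0 < M := lt_trans hA0 hAM
  set B := (A + M) / 2 with hB
  have hAB : A < B := by rw [hB]; linarith
  have hBM : B < M := by rw [hB]; linarith
  have hB0 : 0 < B := lt_trans hA0 hAB
  set δ := min A (B - A) with hδdef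
  have hδ0 : 0 < δ := lt_min hA0 (by linarith)
  have hδA : δ ≤ A := min_le_left _ _
  have hδBA : δ ≤ B - A := min_le_right _ _
  -- Taylor bound
  set g : ℝ → ℝ := (fun t => f (q + t)) - (fun t => q + ξ * t) with hgdef
  have hg1 : ContDiffAt ℝ k (fun t : ℝ => f (q + t)) 0 := by
    have hin : ContDiffAt ℝ k (fun t : ℝ => q + t) 0 :=
      (contDiff_const.add contDiff_id).contDiffAt
    have := ContDiffAt.comp (0:ℝ) (by simpa using hsmooth) hin
    exact this
  have hg2 : ContDiffAt ℝ k (fun t : ℝ => q + ξ * t) 0 :=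
    (contDiff_const.add (contDiff_const.mul contDiff_id)).contDiffAt
  have hgc : ContDiffAt ℝ k g 0 := hg1.sub hg2
  have hshift : ∀ i : ℕ, iteratedDeriv i (fun t => f (q + t)) 0 = iteratedDeriv i f q := by
    intro i
    rw [iteratedDeriv_comp_const_add]
    norm_num
  have hitd : ∀ i : ℕ, i ≤ k → iteratedDeriv i g 0 =
      iteratedDeriv i f q - iteratedDeriv i (fun t : ℝ => q + ξ * t) 0 := by
    intro i hik
    have hcast : (i : WithTop ℕ∞) ≤ k := by exact_mod_cast hik
    rw [hgdef, itd_sub (hg1.of_le hcast) (hg2.of_le hcast), hshift]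
  have h0 : ∀ i, i < k → iteratedDeriv i g 0 = 0 := by
    intro i hik
    rcases Nat.lt_or_ge i 2 with h2 | h2
    · interval_cases i
      · rw [iteratedDeriv_zero]
        simp [hgdef, hfix]
      · rw [hitd 1 (by omega), hd1, itd_affine_one]
        simp
    · rw [hitd i hik.le, hdr i (by omega) hik, itd_affine q ξ i h2]
      simp
  have hDg : iteratedDeriv k g 0 = D := by
    rw [hitd k le_rfl, itd_affine q ξ k (by omega)]
    simp [hD]
  obtain ⟨r1, hr1, hT⟩ := Metric.eventually_nhds_iff.mp (peano k g hgc h0 δ hδ0)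
  have htknn : ∀ t : ℝ, 0 ≤ t ^ k := fun t => hkeven.pow_nonneg t
  have hTt : ∀ t : ℝ, |t| < r1 → |f (q + t) - (q + ξ * t) - A * t ^ k| ≤ δ * t ^ k := by
    intro t ht
    have h := hT (y := t) (by rwa [Real.dist_eq, sub_zero])
    rw [hDg, hkeven.pow_abs] at h
    simpa [hgdef, hA] using h
  have hT1 : ∀ t : ℝ, |t| < r1 → q + ξ * t ≤ f (q + t) := by
    intro t ht
    have h := (abs_le.mp (hTt t ht)).1
    have h2 : 0 ≤ (A - δ) * t ^ k := mul_nonneg (by linarith) (htknn t)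
    nlinarith
  have hT2 : ∀ t : ℝ, |t| < r1 → f (q + t) ≤ q + ξ * t + B * t ^ k := by
    intro t ht
    have h := (abs_le.mp (hTt t ht)).2
    have h2 : 0 ≤ (B - A - δ) * t ^ k := mul_nonneg (by linarith) (htknn t)
    nlinarith
  -- Monotonicity near q
  have hone_le : (1 : WithTop ℕ∞) ≤ k := by exact_mod_cast (by omega : 1 ≤ k)
  obtain ⟨u2, hu2, hcd2⟩ := hsmooth.contDiffOn hone_le (by simp)
  obtain ⟨v2, hvu2, hv2, hqv2⟩ := mem_nhds_iff.mp hu2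
  have hderc : ContinuousOn (deriv f) v2 :=
    (hcd2.mono hvu2).continuousOn_deriv_of_isOpen hv2 le_rfl
  have hdfq : deriv f q = ξ := by rw [← hd1, iteratedDeriv_one]
  have hcAt : ContinuousAt (deriv f) q := hderc.continuousAt (hv2.mem_nhds hqv2)
  have hev : ∀ᶠ y in nhds q, 0 < deriv f y :=
    hcAt.eventually_mem (Ioi_mem_nhds (by rw [hdfq]; linarith))
  obtain ⟨r2, hr2, hball2⟩ := Metric.eventually_nhds_iff.mp hev
  have hmono2 : StrictMonoOn f (Metric.ball q r2) := by
    apply strictMonoOn_of_deriv_pos (convex_ball q r2)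
    · intro y hy
      rw [Metric.mem_ball] at hy
      exact (differentiableAt_of_deriv_ne_zero
        (ne_of_gt (hball2 hy))).continuousAt.continuousWithinAt
    · intro y hy
      rw [Metric.isOpen_ball.interior_eq, Metric.mem_ball] at hy
      exact hball2 hy
  -- choice of ε
  set K := 1 + c with hKdef
  have hK1 : 1 ≤ K := by rw [hKdef]; linarith
  have hK0 : 0 < K := by linarith
  clear_value K
  have hφc : ContinuousAt (fun e : ℝ => B * (1 + c * e ^ m / ξ ^ m) ^ k) 0 := by fun_prop
  have hφ0 : B * (1 + c * (0:ℝ) ^ m / ξ ^ m) ^ k < M := by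
    rw [zero_pow (by omega : m ≠ 0)]
    simpa using hBM
  have hev3 : ∀ᶠ e in nhds (0:ℝ), B * (1 + c * e ^ m / ξ ^ m) ^ k < M :=
    hφc.eventually_lt_const hφ0
  obtain ⟨r3, hr3, hball3⟩ := Metric.eventually_nhds_iff.mp hev3
  set ε := min (min r1 r2 / (2 * K)) (min (r3 / 2) 1) with hεdef
  clear_value ε
  have hrr : 0 < min r1 r2 := lt_min hr1 hr2
  have hε0 : 0 < ε := by
    rw [hεdef]
    apply lt_min
    · positivity
    · exact lt_min (by positivity) one_pos
  have hεK : ε * K ≤ min r1 r2 / 2 := by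
    have h1 : ε ≤ min r1 r2 / (2 * K) := by rw [hεdef]; exact min_le_left _ _
    have h2 : ε * K ≤ (min r1 r2 / (2 * K)) * K :=
      mul_le_mul_of_nonneg_right h1 hK0.le
    calc ε * K ≤ (min r1 r2 / (2 * K)) * K := h2
      _ = min r1 r2 / 2 := by field_simp
  have hεKr1 : ε * K < r1 := by
    have := min_le_left r1 r2
    linarith
  have hεKr2 : ε * K < r2 := by
    have := min_le_right r1 r2
    linarith
  have hεεK : ε ≤ ε * K := le_mul_of_one_le_right hε0.le hK1
  have hε1 : ε ≤ 1 := by rw [hεdef]; exact le_trans (min_le_right _ _) (min_le_right _ _)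
  have hεr3 : ε < r3 := by
    have : ε ≤ r3 / 2 := by rw [hεdef]; exact le_trans (min_le_right _ _) (min_le_left _ _)
    linarith
  have hφε : B * (1 + c * ε ^ m / ξ ^ m) ^ k < M :=
    hball3 (by rw [Real.dist_eq, sub_zero, abs_of_pos hε0]; exact hεr3)
  clear_value D A M B δ
  -- main induction
  refine ⟨ε, hε0, fun n => ?_⟩
  induction n with
  | zero =>
    intro x hx
    simp only [Function.iterate_zero, id_eq, pow_zero, div_one]
    constructor
    · exact le_refl _
    · have h1 : 0 ≤ c * x ^ k := mul_nonneg hc0.le (htknn x)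
      linarith
  | succ n IH =>
    intro x hx
    have hxa : 0 ≤ |x| := abs_nonneg x
    have hx' : |x / ξ| ≤ ε := by
      rw [abs_div, abs_of_pos hξ0]
      exact le_trans (div_le_self hxa hξ.le) hx
    obtain ⟨hlo, hhi⟩ := IH (x / ξ) hx'
    have harg : q + x / ξ ^ (n + 1) = q + x / ξ / ξ ^ n := by
      rw [div_div, ← pow_succ']
    rw [Function.iterate_succ_apply', harg]
    set u := f^[n] (q + x / ξ / ξ ^ n) with hu
    clear_value u
    set t₁ := x / ξ + c * (x / ξ) ^ k with ht₁def
    set La := |x| / ξ + c * |x| ^ k / ξ ^ k with hLadef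
    clear_value t₁ La
    have habs_pow : |x / ξ| ^ k = |x| ^ k / ξ ^ k := by
      rw [abs_div, abs_of_pos hξ0, div_pow]
    have hLa1 : |t₁| ≤ La := by
      rw [ht₁def, hLadef]
      refine (abs_add_le _ _).trans ?_
      rw [abs_div, abs_of_pos hξ0, abs_mul, abs_of_pos hc0, abs_pow, habs_pow]
      exact le_of_eq (by ring)
    have hLa0 : 0 ≤ La := le_trans (abs_nonneg _) hLa1
    have hxm : |x| ^ m ≤ ε ^ m := pow_le_pow_left₀ hxa hx m
    have hxk : |x| ^ k ≤ ε ^ k := pow_le_pow_left₀ hxa hx k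
    have hεk_le : ε ^ k ≤ ε := by
      calc ε ^ k ≤ ε ^ 1 := pow_le_pow_of_le_one hε0.le hε1 (by omega)
        _ = ε := pow_one ε
    have hξk1 : (1:ℝ) ≤ ξ ^ k := one_le_pow₀ hξ.le
    have hxdξ : |x| / ξ ≤ ε := le_trans (div_le_self hxa hξ.le) hx
    have hLa2 : La ≤ ε * K := by
      rw [hLadef, hKdef]
      have h1 : c * |x| ^ k / ξ ^ k ≤ c * ε := by
        have h2 : c * |x| ^ k / ξ ^ k ≤ c * |x| ^ k := div_le_self (by positivity) hξk1
        have h3 : c * |x| ^ k ≤ c * ε ^ k := mul_le_mul_of_nonneg_left hxk hc0.le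
        have h4 : c * ε ^ k ≤ c * ε := mul_le_mul_of_nonneg_left hεk_le hc0.le
        linarith
      linarith
    have hLaεK : |t₁| ≤ ε * K := hLa1.trans hLa2
    -- memberships in the monotonicity ball
    have hmem1 : q + x / ξ ∈ Metric.ball q r2 := by
      rw [Metric.mem_ball, Real.dist_eq, add_sub_cancel_left]
      calc |x / ξ| ≤ ε := hx'
        _ ≤ ε * K := hεεK
        _ < r2 := hεKr2
    have hmemu : u ∈ Metric.ball q r2 := by
      rw [Metric.mem_ball, Real.dist_eq]
      have h1 : x / ξ ≤ u - q := by linarith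
      have h2 : u - q ≤ t₁ := by rw [ht₁def]; linarith
      have h3 : -(ε * K) ≤ x / ξ := by
        have := neg_abs_le (x / ξ)
        have h4 : |x / ξ| ≤ ε * K := hx'.trans hεεK
        linarith
      have h5 : t₁ ≤ ε * K := (le_abs_self t₁).trans hLaεK
      rw [abs_lt]
      constructor <;> linarith
    have hmem3 : q + t₁ ∈ Metric.ball q r2 := by
      rw [Metric.mem_ball, Real.dist_eq, add_sub_cancel_left]
      exact lt_of_le_of_lt hLaεK hεKr2
    -- lower bound
    have hstep1 : f (q + x / ξ) ≤ f u := by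
      apply hmono2.monotoneOn hmem1 hmemu
      linarith
    have hstep0 : q + x ≤ f (q + x / ξ) := by
      have hr : |x / ξ| < r1 := lt_of_le_of_lt (hx'.trans hεεK) hεKr1
      have := hT1 (x / ξ) hr
      have hxx : ξ * (x / ξ) = x := by field_simp
      rwa [hxx] at this
    -- upper bound
    have hstep2 : f u ≤ f (q + t₁) := by
      apply hmono2.monotoneOn hmemu hmem3
      rw [ht₁def]; linarith
    have hstep3 : f (q + t₁) ≤ q + ξ * t₁ + B * t₁ ^ k :=
      hT2 t₁ (lt_of_le_of_lt hLaεK hεKr1)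
    have e1 : ξ * t₁ = x + c * x ^ k / ξ ^ m := by
      rw [ht₁def, div_pow, hkdef, pow_succ]
      field_simp
      ring
    have e2 : B * t₁ ^ k ≤ M * x ^ k / ξ ^ k := by
      have ht1k : t₁ ^ k = |t₁| ^ k := (hkeven.pow_abs t₁).symm
      have hLak : |t₁| ^ k ≤ La ^ k := pow_le_pow_left₀ (abs_nonneg _) hLa1 k
      have hLaeq : La = |x| / ξ * (1 + c * |x| ^ m / ξ ^ m) := by
        rw [hLadef, hkdef, pow_succ, pow_succ]
        field_simp
      have hW1 : (0:ℝ) ≤ 1 + c * |x| ^ m / ξ ^ m := by positivity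
      have hW12 : 1 + c * |x| ^ m / ξ ^ m ≤ 1 + c * ε ^ m / ξ ^ m := by
        gcongr
      have hLakk : La ^ k ≤ (|x| / ξ) ^ k * (1 + c * ε ^ m / ξ ^ m) ^ k := by
        rw [hLaeq, mul_pow]
        exact mul_le_mul_of_nonneg_left (pow_le_pow_left₀ hW1 hW12 k) (by positivity)
      have hxkabs : (|x| / ξ) ^ k = x ^ k / ξ ^ k := by
        rw [div_pow, hkeven.pow_abs]
      have hxknn : (0:ℝ) ≤ x ^ k / ξ ^ k := by
        rw [← hxkabs]; positivity
      calc B * t₁ ^ k = B * |t₁| ^ k := by rw [ht1k]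
        _ ≤ B * ((|x| / ξ) ^ k * (1 + c * ε ^ m / ξ ^ m) ^ k) :=
            mul_le_mul_of_nonneg_left (hLak.trans hLakk) hB0.le
        _ = (B * (1 + c * ε ^ m / ξ ^ m) ^ k) * (x ^ k / ξ ^ k) := by rw [hxkabs]; ring
        _ ≤ M * (x ^ k / ξ ^ k) := mul_le_mul_of_nonneg_right hφε.le hxknn
        _ = M * x ^ k / ξ ^ k := by ring
    have e3 : c * x ^ k / ξ ^ m + M * x ^ k / ξ ^ k = c * x ^ k := by
      rw [hM, hkdef, pow_succ]
      field_simp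
      ring
    refine ⟨le_trans hstep0 hstep1, ?_⟩
    calc f u ≤ q + ξ * t₁ + B * t₁ ^ k := le_trans hstep2 hstep3
      _ ≤ q + (x + c * x ^ k / ξ ^ m) + M * x ^ k / ξ ^ k := by rw [e1]; linarith
      _ = q + x + c * x ^ k := by linarith
end

section
/- Let G be the probability generating function of a distribution (p_k) on {1,2,...}, R = 1 - G. Fix x \in (0,1) with f(x) = x where f = R\circ R, and define h(b) = R(2R(x) - R(x-b)) - R(R(x)) for b \in [0, \min(x,1-x)]. Then h(0) = 0, h'(0) = f'(x), and if G'' exists and G is strictly convex with G' > 0 on the relevant range, then h is strictly increasing and strictly concave on (0, \min(x,1-x)). Consequently: if f'(x) \le 1 then h(b) < b for all b \in (0, \min(x,1-x)], and if f'(x) > 1 then h has a fixed point in (0, \min(x,1-x)]. -/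
open Set

theorem stmt_18 (p : ℕ → ℝ) (hp0 : ∀ k, 0 ≤ p k) (hp00 : p 0 = 0)
    (hsum : Summable p) (hsum1 : ∑' k, p k = 1)
    (hp2 : ∃ k, 2 ≤ k ∧ 0 < p k)
    (G R R' R'' f : ℝ → ℝ)
    (hG : ∀ t, G t = ∑' k, p k * t ^ k)
    (hRdef : ∀ t, R t = 1 - G t)
    (hf : ∀ t, f t = R (R t))
    (hR' : ∀ t ∈ Set.Icc (-1:ℝ) 1, HasDerivAt R (R' t) t)
    (hR'' : ∀ t ∈ Set.Icc (-1:ℝ) 1, HasDerivAt R' (R'' t) t)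
    (hRpos : ∀ t ∈ Set.Ioo (0:ℝ) 1, 0 < R t)
    (hR'neg : ∀ t ∈ Set.Icc (-1:ℝ) 1, R' t < 0)
    (hR''neg : ∀ t ∈ Set.Icc (-1:ℝ) 1, R'' t < 0)
    (x : ℝ) (hx : x ∈ Set.Ioo (0:ℝ) 1) (hfix : f x = x)
    (m : ℝ) (hm : m = min x (1 - x))
    (h : ℝ → ℝ)
    (hh : ∀ b, h b = R (2 * R x - R (x - b)) - R (R x)) :
    h 0 = 0 ∧
    HasDerivAt h (R' (R x) * R' x) 0 ∧
    StrictMonoOn h (Set.Icc 0 m) ∧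
    StrictConcaveOn ℝ (Set.Icc 0 m) h ∧
    (R' (R x) * R' x ≤ 1 → ∀ b ∈ Set.Ioc (0:ℝ) m, h b < b) ∧
    (1 < R' (R x) * R' x → ∃ b ∈ Set.Ioc (0:ℝ) m, h b = b) := by
  obtain ⟨hx0, hx1⟩ := hx
  have hm0 : 0 < m := by rw [hm]; exact lt_min hx0 (by linarith)
  have hmx : m ≤ x := by rw [hm]; exact min_le_left _ _
  have hm1x : m ≤ 1 - x := by rw [hm]; exact min_le_right _ _
  -- basic values of G and R
  have hG0 : G 0 = 0 := by
    rw [hG]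
    have hz : (fun k => p k * (0:ℝ) ^ k) = fun _ => (0:ℝ) := by
      funext k
      cases k with
      | zero => simp [hp00]
      | succ n => simp
    rw [hz, tsum_zero]
  have hG1 : G 1 = 1 := by rw [hG]; simpa using hsum1
  have hGx : 0 < G x := by
    obtain ⟨k, hk2, hpk⟩ := hp2
    have hsx : Summable (fun k => p k * x ^ k) := by
      refine Summable.of_nonneg_of_le
        (fun k => mul_nonneg (hp0 k) (pow_nonneg hx0.le k)) (fun k => ?_) hsum
      have hx1' : x ^ k ≤ 1 := pow_le_one₀ (le_of_lt hx0) (le_of_lt hx1)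
      nlinarith [hp0 k]
    have hle := Summable.le_tsum hsx k (fun j _ => mul_nonneg (hp0 j) (pow_nonneg hx0.le j))
    rw [hG]
    have hxk : 0 < x ^ k := pow_pos hx0 k
    nlinarith
  have hR0 : R 0 = 1 := by rw [hRdef, hG0]; ring
  have hR1 : R 1 = 0 := by rw [hRdef, hG1]; ring
  have hRx0 : 0 < R x := hRpos x ⟨hx0, hx1⟩
  have hRx1 : R x < 1 := by rw [hRdef]; linarith
  have hfx : R (R x) = x := by rw [← hf]; exact hfix
  -- continuity, strict antitonicity and concavity of R on [-1,1]
  have hRcont : ContinuousOn R (Icc (-1:ℝ) 1) := fun t ht =>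
    (hR' t ht).continuousAt.continuousWithinAt
  have hderivR : ∀ t ∈ Ioo (-1:ℝ) 1, deriv R t = R' t := fun t ht =>
    (hR' t (Ioo_subset_Icc_self ht)).deriv
  have hRanti : StrictAntiOn R (Icc (-1:ℝ) 1) := by
    apply strictAntiOn_of_deriv_neg (convex_Icc _ _) hRcont
    intro t ht
    rw [interior_Icc] at ht
    rw [hderivR t ht]
    exact hR'neg t (Ioo_subset_Icc_self ht)
  have hRconc : ConcaveOn ℝ (Icc (-1:ℝ) 1) R := by
    apply StrictConcaveOn.concaveOn
    apply strictConcaveOn_of_deriv2_neg (convex_Icc _ _) hRcont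
    intro t ht
    rw [interior_Icc] at ht
    have hev : deriv R =ᶠ[nhds t] R' :=
      Filter.eventuallyEq_of_mem (isOpen_Ioo.mem_nhds ht) hderivR
    have h2 : deriv^[2] R t = deriv (deriv R) t := rfl
    rw [h2, hev.deriv_eq, (hR'' t (Ioo_subset_Icc_self ht)).deriv]
    exact hR''neg t (Ioo_subset_Icc_self ht)
  have hmid : ∀ a c : ℝ, a ∈ Icc (-1:ℝ) 1 → c ∈ Icc (-1:ℝ) 1 →
      R a + R c ≤ 2 * R ((a + c) / 2) := by
    intro a c ha hc
    have hcc := hRconc.2 ha hc (by norm_num : (0:ℝ) ≤ 1/2)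
      (by norm_num : (0:ℝ) ≤ 1/2) (by norm_num)
    simp only [smul_eq_mul] at hcc
    have h2 : (1/2 : ℝ) * a + (1/2 : ℝ) * c = (a + c)/2 := by ring
    rw [h2] at hcc
    linarith
  -- domain facts
  have hmemx : x ∈ Icc (-1:ℝ) 1 := ⟨by linarith, le_of_lt hx1⟩
  have hmem0 : (0:ℝ) ∈ Icc (-1:ℝ) 1 := by norm_num
  have hxbI : ∀ b ∈ Icc (0:ℝ) m, x - b ∈ Icc (-1:ℝ) 1 :=
    fun b hb => ⟨by linarith [hb.2], by linarith [hb.1]⟩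
  have hRxb : ∀ b ∈ Icc (0:ℝ) m, R x ≤ R (x - b) ∧ R (x - b) ≤ 1 := by
    intro b hb
    constructor
    · exact hRanti.antitoneOn (hxbI b hb) hmemx (by linarith [hb.1])
    · rw [← hR0]; exact hRanti.antitoneOn hmem0 (hxbI b hb) (by linarith [hb.2])
  have huI : ∀ b ∈ Icc (0:ℝ) m, 2 * R x - R (x - b) ∈ Icc (-1:ℝ) 1 := by
    intro b hb
    obtain ⟨h1, h2⟩ := hRxb b hb
    exact ⟨by linarith, by linarith⟩
  -- derivatives
  have hUD : ∀ b : ℝ, x - b ∈ Icc (-1:ℝ) 1 →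
      HasDerivAt (fun b => 2 * R x - R (x - b)) (R' (x - b)) b := by
    intro b hb
    have h1 : HasDerivAt (fun b : ℝ => x - b) (-1) b := by
      simpa using (hasDerivAt_id b).const_sub x
    have h2 := (hR' (x - b) hb).comp b h1
    have h3 := h2.const_sub (2 * R x)
    simpa using h3
  have hhD : ∀ b ∈ Icc (0:ℝ) m,
      HasDerivAt h (R' (2 * R x - R (x - b)) * R' (x - b)) b := by
    intro b hb
    have hU := hUD b (hxbI b hb)
    have hcomp := (hR' _ (huI b hb)).comp b hU
    have heq : h = fun b => R (2 * R x - R (x - b)) - R (R x) := funext hh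
    rw [heq]
    exact hcomp.sub_const (R (R x))
  set H1 : ℝ → ℝ := fun b => R' (2 * R x - R (x - b)) * R' (x - b) with hH1def
  have hH1D : ∀ b ∈ Icc (0:ℝ) m,
      HasDerivAt H1 (R'' (2 * R x - R (x - b)) * R' (x - b) * R' (x - b)
        - R' (2 * R x - R (x - b)) * R'' (x - b)) b := by
    intro b hb
    have hU := hUD b (hxbI b hb)
    have h1 : HasDerivAt (fun b => R' (2 * R x - R (x - b)))
        (R'' (2 * R x - R (x - b)) * R' (x - b)) b := (hR'' _ (huI b hb)).comp b hU
    have h2 : HasDerivAt (fun b : ℝ => x - b) (-1) b := by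
      simpa using (hasDerivAt_id b).const_sub x
    have h3 : HasDerivAt (fun b => R' (x - b)) (R'' (x - b) * (-1)) b :=
      (hR'' _ (hxbI b hb)).comp b h2
    have h4 : HasDerivAt (fun y => R' (2 * R x - R (x - y)) * R' (x - y)) _ b := h1.mul h3
    convert h4 using 1
    ring
  have hH1pos : ∀ b ∈ Icc (0:ℝ) m, 0 < H1 b := by
    intro b hb
    exact mul_pos_of_neg_of_neg (hR'neg _ (huI b hb)) (hR'neg _ (hxbI b hb))
  have hH2neg : ∀ b ∈ Icc (0:ℝ) m,
      R'' (2 * R x - R (x - b)) * R' (x - b) * R' (x - b)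
        - R' (2 * R x - R (x - b)) * R'' (x - b) < 0 := by
    intro b hb
    have h1 := hR'neg _ (huI b hb)
    have h2 := hR'neg _ (hxbI b hb)
    have h3 := hR''neg _ (huI b hb)
    have h4 := hR''neg _ (hxbI b hb)
    have t1 : R'' (2 * R x - R (x - b)) * R' (x - b) * R' (x - b) < 0 :=
      mul_neg_of_pos_of_neg (mul_pos_of_neg_of_neg h3 h2) h2
    have t2 : 0 < R' (2 * R x - R (x - b)) * R'' (x - b) :=
      mul_pos_of_neg_of_neg h1 h4
    linarith
  have hhcont : ContinuousOn h (Icc 0 m) :=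
    fun b hb => (hhD b hb).continuousAt.continuousWithinAt
  have hH1cont : ContinuousOn H1 (Icc 0 m) :=
    fun b hb => (hH1D b hb).continuousAt.continuousWithinAt
  have hIcc : Ioo (0:ℝ) m ⊆ Icc 0 m := Ioo_subset_Icc_self
  have hmono : StrictMonoOn h (Icc 0 m) := by
    apply strictMonoOn_of_deriv_pos (convex_Icc _ _) hhcont
    intro b hb
    rw [interior_Icc] at hb
    rw [(hhD b (hIcc hb)).deriv]
    exact hH1pos b (hIcc hb)
  have hconc : StrictConcaveOn ℝ (Icc 0 m) h := by
    apply strictConcaveOn_of_deriv2_neg (convex_Icc _ _) hhcont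
    intro b hb
    rw [interior_Icc] at hb
    have hev : deriv h =ᶠ[nhds b] H1 :=
      Filter.eventuallyEq_of_mem (isOpen_Ioo.mem_nhds hb)
        (fun y hy => (hhD y (hIcc hy)).deriv)
    have h2 : deriv^[2] h b = deriv (deriv h) b := rfl
    rw [h2, hev.deriv_eq, (hH1D b (hIcc hb)).deriv]
    exact hH2neg b (hIcc hb)
  have hH1anti : StrictAntiOn H1 (Icc 0 m) := by
    apply strictAntiOn_of_deriv_neg (convex_Icc _ _) hH1cont
    intro b hb
    rw [interior_Icc] at hb
    rw [(hH1D b (hIcc hb)).deriv]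
    exact hH2neg b (hIcc hb)
  -- h 0 = 0
  have hh0 : h 0 = 0 := by
    rw [hh, sub_zero, show 2 * R x - R x = R x by ring, sub_self]
  have hH10 : H1 0 = R' (R x) * R' x := by
    have hs : 2 * R x - R x = R x := by ring
    simp only [hH1def, sub_zero, hs]
  have hd0 : HasDerivAt h (R' (R x) * R' x) 0 := by
    have hd := hhD 0 ⟨le_refl 0, le_of_lt hm0⟩
    rw [sub_zero] at hd
    rwa [show 2 * R x - R x = R x by ring] at hd
  -- part 5
  have part5 : R' (R x) * R' x ≤ 1 → ∀ b ∈ Set.Ioc (0:ℝ) m, h b < b := by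
    intro hle b hb
    obtain ⟨hb0, hbm⟩ := hb
    obtain ⟨c, hc, hceq⟩ := exists_hasDerivAt_eq_slope h H1 hb0
      (hhcont.mono (Icc_subset_Icc le_rfl hbm))
      (fun y hy => hhD y ⟨le_of_lt hy.1, le_trans (le_of_lt hy.2) hbm⟩)
    rw [hh0, sub_zero, sub_zero] at hceq
    have hcm : c ∈ Icc (0:ℝ) m := ⟨le_of_lt hc.1, le_trans (le_of_lt hc.2) hbm⟩
    have h0m : (0:ℝ) ∈ Icc (0:ℝ) m := ⟨le_rfl, le_of_lt hm0⟩
    have hlt := hH1anti h0m hcm hc.1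
    rw [hH10] at hlt
    have hc1 : H1 c < 1 := lt_of_lt_of_le hlt hle
    have hbeq : h b = H1 c * b := (div_eq_iff (ne_of_gt hb0)).1 hceq.symm
    rw [hbeq]
    nlinarith
  -- part 6
  have part6 : 1 < R' (R x) * R' x → ∃ b ∈ Set.Ioc (0:ℝ) m, h b = b := by
    intro hgt
    have hhm : h m ≤ m := by
      rcases le_total x (1 - x) with hcase | hcase
      · have hmx' : m = x := by rw [hm, min_eq_left hcase]
        have ha : (2 * R x - 1 : ℝ) ∈ Icc (-1:ℝ) 1 := ⟨by linarith, by linarith⟩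
        have hc1 : (1:ℝ) ∈ Icc (-1:ℝ) 1 := by norm_num
        have hmid1 := hmid (2 * R x - 1) 1 ha hc1
        rw [hR1, show ((2 * R x - 1) + 1) / 2 = R x by ring, hfx] at hmid1
        rw [hh, hmx', sub_self, hR0, hfx]
        linarith
      · have hmx' : m = 1 - x := by rw [hm, min_eq_right hcase]
        have hxm : x - m = 2 * x - 1 := by rw [hmx']; ring
        have ha : (2 * x - 1 : ℝ) ∈ Icc (-1:ℝ) 1 := ⟨by linarith, by linarith⟩
        have hc1 : (1:ℝ) ∈ Icc (-1:ℝ) 1 := by norm_num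
        have hmid1 := hmid (2 * x - 1) 1 ha hc1
        rw [hR1, show ((2 * x - 1) + 1) / 2 = x by ring] at hmid1
        have hu0 : 0 ≤ 2 * R x - R (2 * x - 1) := by linarith
        have hu1 : 2 * R x - R (2 * x - 1) ≤ 1 := by
          have hrr := (hRxb m ⟨le_of_lt hm0, le_rfl⟩).1
          rw [hxm] at hrr; linarith
        have hRu : R (2 * R x - R (2 * x - 1)) ≤ 1 := by
          have hle := hRanti.antitoneOn hmem0 ⟨by linarith, hu1⟩ hu0
          rwa [hR0] at hle
        rw [hh, hxm, hfx, hmx']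
        linarith
    have hslope : Filter.Tendsto (slope h 0) (nhdsWithin 0 {0}ᶜ)
        (nhds (R' (R x) * R' x)) := hasDerivAt_iff_tendsto_slope.1 hd0
    have hev1 : ∀ᶠ b in nhdsWithin (0:ℝ) {0}ᶜ, 1 < slope h 0 b :=
      hslope.eventually (eventually_gt_nhds hgt)
    have hev2 : ∀ᶠ b in nhdsWithin (0:ℝ) (Set.Ioi 0), 1 < slope h 0 b :=
      hev1.filter_mono (nhdsWithin_mono 0 (fun y hy => ne_of_gt hy))
    have hev3 : ∀ᶠ b in nhdsWithin (0:ℝ) (Set.Ioi 0), b ∈ Ioo (0:ℝ) m :=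
      Filter.eventually_of_mem (Ioo_mem_nhdsGT_of_mem ⟨le_rfl, hm0⟩)
        (fun y hy => hy)
    obtain ⟨b₁, hb₁slope, hb₁mem⟩ := (hev2.and hev3).exists
    have hb₁ : b₁ < h b₁ := by
      have hs : slope h 0 b₁ = h b₁ / b₁ := by
        rw [slope_def_field]; rw [hh0]; ring_nf
      rw [hs] at hb₁slope
      have := (one_lt_div hb₁mem.1).1 hb₁slope
      linarith
    have hcont2 : ContinuousOn (fun b => h b - b) (Icc b₁ m) :=
      (hhcont.mono (Icc_subset_Icc (le_of_lt hb₁mem.1) le_rfl)).sub continuousOn_id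
    have h0mem : (0:ℝ) ∈ Icc (h m - m) (h b₁ - b₁) := ⟨by linarith, by linarith⟩
    obtain ⟨c, hcmem, hceq⟩ :=
      intermediate_value_Icc' (le_of_lt hb₁mem.2) hcont2 h0mem
    refine ⟨c, ⟨lt_of_lt_of_le hb₁mem.1 hcmem.1, hcmem.2⟩, ?_⟩
    have : h c - c = 0 := hceq
    linarith
  exact ⟨hh0, hd0, hmono, hconc, part5, part6⟩
end
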